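/- Let n ∈ ℕ, n ≥ 1, let μ ∈ ℝ with μ ≠ 0, and set l = 2(μ − 1)/μ. Let u, v : ℝ^n → ℝ be twice continuously differentiable with v(x) > 0 for all x. Then the pair (u, v^μ) satisfies the stationary wave-map system Δu − (l/v^μ)∇u·∇(v^μ) = 0 and Δ(v^μ) + (l/(2v^μ))(|∇u|² − |∇(v^μ)|²) = 0 on ℝ^n if and only if (u, v) satisfies Δu − (2(μ − 1)/v)∇u·∇v = 0 and Δv + ((μ − 1)/μ²)·v^{1 − 2μ}·|∇u|² = 0 on ℝ^n. -/

import Mathlib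

noncomputable section

def pd {n : ℕ} (f : EuclideanSpace ℝ (Fin n) → ℝ) (x : EuclideanSpace ℝ (Fin n))
    (i : Fin n) : ℝ :=
  fderiv ℝ f x (EuclideanSpace.single i 1)

def lapl {n : ℕ} (f : EuclideanSpace ℝ (Fin n) → ℝ) (x : EuclideanSpace ℝ (Fin n)) : ℝ :=
  ∑ i, pd (fun y => pd f y i) x i

def gradDot {n : ℕ} (f g : EuclideanSpace ℝ (Fin n) → ℝ)
    (x : EuclideanSpace ℝ (Fin n)) : ℝ :=
  ∑ i, pd f x i * pd g x i

namespace Stmt8Aux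

variable {n : ℕ}

lemma pd_mul {f g : EuclideanSpace ℝ (Fin n) → ℝ} {x : EuclideanSpace ℝ (Fin n)}
    (hf : DifferentiableAt ℝ f x) (hg : DifferentiableAt ℝ g x) (i : Fin n) :
    pd (fun y => f y * g y) x i = f x * pd g x i + g x * pd f x i := by
  simp [pd, fderiv_fun_mul hf hg]

lemma pd_rpow {v : EuclideanSpace ℝ (Fin n) → ℝ} (hv : Differentiable ℝ v)
    (hvpos : ∀ x, 0 < v x) (c : ℝ) (x : EuclideanSpace ℝ (Fin n)) (i : Fin n) :
    pd (fun y => v y ^ c) x i = c * v x ^ (c - 1) * pd v x i := by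
  have h := ((hv x).hasFDerivAt.rpow_const (p := c) (Or.inl (hvpos x).ne'))
  simp [pd, h.fderiv]

lemma diff_rpow {v : EuclideanSpace ℝ (Fin n) → ℝ} (hv : Differentiable ℝ v)
    (hvpos : ∀ x, 0 < v x) (c : ℝ) :
    Differentiable ℝ (fun y => v y ^ c) :=
  hv.rpow_const (fun x => Or.inl (hvpos x).ne')

lemma diff_pd {v : EuclideanSpace ℝ (Fin n) → ℝ} (hv : ContDiff ℝ 2 v) (i : Fin n) :
    Differentiable ℝ (fun y => pd v y i) := by
  have h1 : ContDiff ℝ 1 (fderiv ℝ v) := hv.fderiv_right (by norm_num)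
  have h2 := (ContinuousLinearMap.apply ℝ ℝ
      (EuclideanSpace.single (𝕜 := ℝ) i (1 : ℝ))).contDiff.comp h1
  exact h2.differentiable (by norm_num)

lemma gradDot_rpow_right (u v : EuclideanSpace ℝ (Fin n) → ℝ) (hv : Differentiable ℝ v)
    (hvpos : ∀ x, 0 < v x) (c : ℝ) (x : EuclideanSpace ℝ (Fin n)) :
    gradDot u (fun y => v y ^ c) x = c * v x ^ (c - 1) * gradDot u v x := by
  simp only [gradDot, Finset.mul_sum]
  exact Finset.sum_congr rfl fun i _ => by rw [pd_rpow hv hvpos]; ring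

lemma gradDot_rpow_both (v : EuclideanSpace ℝ (Fin n) → ℝ) (hv : Differentiable ℝ v)
    (hvpos : ∀ x, 0 < v x) (c : ℝ) (x : EuclideanSpace ℝ (Fin n)) :
    gradDot (fun y => v y ^ c) (fun y => v y ^ c) x
      = c * c * (v x ^ (c - 1) * v x ^ (c - 1)) * gradDot v v x := by
  simp only [gradDot, Finset.mul_sum]
  exact Finset.sum_congr rfl fun i _ => by rw [pd_rpow hv hvpos]; ring

lemma lapl_rpow (v : EuclideanSpace ℝ (Fin n) → ℝ) (hv : ContDiff ℝ 2 v)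
    (hvpos : ∀ x, 0 < v x) (c : ℝ) (x : EuclideanSpace ℝ (Fin n)) :
    lapl (fun y => v y ^ c) x
      = c * (c - 1) * v x ^ (c - 2) * gradDot v v x + c * v x ^ (c - 1) * lapl v x := by
  have hvd : Differentiable ℝ v := hv.differentiable (by norm_num)
  have step : ∀ i : Fin n,
      pd (fun y => pd (fun z => v z ^ c) y i) x i
        = c * (c - 1) * v x ^ (c - 2) * (pd v x i * pd v x i)
          + c * v x ^ (c - 1) * pd (fun y => pd v y i) x i := by
    intro i
    have hfun : (fun y => pd (fun z => v z ^ c) y i)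
        = fun y => (fun y => c * v y ^ (c - 1)) y * (fun y => pd v y i) y := by
      funext y
      rw [pd_rpow hvd hvpos]
    rw [hfun]
    have hf : DifferentiableAt ℝ (fun y => c * v y ^ (c - 1)) x :=
      ((diff_rpow hvd hvpos (c - 1)) x).const_mul c
    have hg : DifferentiableAt ℝ (fun y => pd v y i) x := diff_pd hv i x
    rw [pd_mul hf hg]
    have hc : pd (fun y => c * v y ^ (c - 1)) x i
        = c * ((c - 1) * v x ^ (c - 1 - 1) * pd v x i) := by
      have : (fun y => c * v y ^ (c - 1)) = fun y => c * (fun y => v y ^ (c - 1)) y := rfl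
      simp only [pd, this, fderiv_const_mul ((diff_rpow hvd hvpos (c - 1)) x)]
      rw [ContinuousLinearMap.smul_apply]
      rw [show fderiv ℝ (fun y => v y ^ (c - 1)) x (EuclideanSpace.single i 1)
            = pd (fun y => v y ^ (c - 1)) x i from rfl, pd_rpow hvd hvpos]
      simp only [smul_eq_mul, pd]
    rw [hc]
    have : c - 1 - 1 = c - 2 := by ring
    rw [this]
    ring
  rw [lapl, Finset.sum_congr rfl fun i _ => step i, Finset.sum_add_distrib,
    ← Finset.mul_sum, ← Finset.mul_sum]
  rfl

end Stmt8Aux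

open Stmt8Aux in
/-- with `l = 2(μ−1)/μ`, the pair `(u, v^μ)` satisfies the
stationary wave-map system with target `ℍ²_l` iff `(u, v)` satisfies
`Δu − (2(μ−1)/v)∇u·∇v = 0` and `Δv + ((μ−1)/μ²) v^{1−2μ} |∇u|² = 0`. -/
theorem stmt_8 (n : ℕ) (hn : 1 ≤ n) (μ : ℝ) (hμ : μ ≠ 0) (l : ℝ)
    (hl : l = 2 * (μ - 1) / μ)
    (u v : EuclideanSpace ℝ (Fin n) → ℝ)
    (hu : ContDiff ℝ 2 u) (hv : ContDiff ℝ 2 v)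
    (hvpos : ∀ x, 0 < v x) :
    ((∀ x, lapl u x
        - (l / (v x) ^ μ) * gradDot u (fun y => (v y) ^ μ) x = 0) ∧
     (∀ x, lapl (fun y => (v y) ^ μ) x
        + (l / (2 * (v x) ^ μ)) *
            (gradDot u u x - gradDot (fun y => (v y) ^ μ) (fun y => (v y) ^ μ) x) = 0))
    ↔
    ((∀ x, lapl u x - (2 * (μ - 1) / v x) * gradDot u v x = 0) ∧
     (∀ x, lapl v x
        + ((μ - 1) / μ ^ 2) * (v x) ^ (1 - 2 * μ) * gradDot u u x = 0)) := by
  have hvd : Differentiable ℝ v := hv.differentiable (by norm_num)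
  -- rpow identities
  have key1 : ∀ x, lapl u x - (l / (v x) ^ μ) * gradDot u (fun y => (v y) ^ μ) x
      = lapl u x - (2 * (μ - 1) / v x) * gradDot u v x := by
    intro x
    have ha : (0 : ℝ) < v x := hvpos x
    have hw : (0 : ℝ) < v x ^ μ := Real.rpow_pos_of_pos ha μ
    have h1 : v x ^ (μ - 1) = v x ^ μ / v x := by
      rw [Real.rpow_sub ha, Real.rpow_one]
    rw [gradDot_rpow_right u v hvd hvpos μ x, h1, hl]
    field_simp
  have key2 : ∀ x, lapl (fun y => (v y) ^ μ) x
        + (l / (2 * (v x) ^ μ)) *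
            (gradDot u u x - gradDot (fun y => (v y) ^ μ) (fun y => (v y) ^ μ) x)
      = (μ * v x ^ (μ - 1)) *
          (lapl v x + ((μ - 1) / μ ^ 2) * (v x) ^ (1 - 2 * μ) * gradDot u u x) := by
    intro x
    have ha : (0 : ℝ) < v x := hvpos x
    have hw : (0 : ℝ) < v x ^ μ := Real.rpow_pos_of_pos ha μ
    have h1 : v x ^ (μ - 1) = v x ^ μ / v x := by
      rw [Real.rpow_sub ha, Real.rpow_one]
    have h2 : v x ^ (μ - 2) = v x ^ μ / v x / v x := by
      rw [show μ - 2 = μ - 1 - 1 by ring, Real.rpow_sub ha, Real.rpow_one, h1]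
    have h4 : v x ^ (1 - 2 * μ) = v x / (v x ^ μ * v x ^ μ) := by
      rw [show 1 - 2 * μ = 1 - (μ + μ) by ring, Real.rpow_sub ha, Real.rpow_one,
        Real.rpow_add ha]
    rw [lapl_rpow v hv hvpos μ x, gradDot_rpow_both v hvd hvpos μ x, h1, h2, h4, hl]
    field_simp
    ring
  have hconst : ∀ x, (μ * v x ^ (μ - 1)) ≠ 0 := fun x =>
    mul_ne_zero hμ (Real.rpow_pos_of_pos (hvpos x) _).ne'
  constructor
  · rintro ⟨h1, h2⟩
    constructor
    · intro x; rw [← key1 x]; exact h1 x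
    · intro x
      have := h2 x
      rw [key2 x] at this
      rcases mul_eq_zero.1 this with h | h
      · exact absurd h (hconst x)
      · exact h
  · rintro ⟨h1, h2⟩
    constructor
    · intro x; rw [key1 x]; exact h1 x
    · intro x; rw [key2 x, h2 x, mul_zero]
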